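/- Let μ be a probability measure on ℝ² with no line of full measure, and let s₁, s₂ ∈ ℝ² be two points not colinear with the origin. Define, for Θ = (R, t) with R ∈ ℝ^{2×2} and t ∈ ℝ², the function P(Θ) = (1/2) Σ_{i=1,2} ∫ (‖a − R sᵢ − t‖ − ‖a − R⁰ sᵢ − t⁰‖)² dμ(a). Then P(Θ) = 0 implies R sᵢ + t = R⁰ sᵢ + t⁰ for i = 1, 2, and consequently (since S = [s₁ s₂] is invertible and using a third affine independence) R = R⁰ and t = t⁰ when restricted to R, R⁰ ∈ SO(2). In particular P has a unique zero at Θ⁰ = (R⁰, t⁰). -/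

import Mathlib

open MeasureTheory Matrix

/-- `SO(2)`: real 2×2 orthogonal matrices with determinant 1. -/
def SO2 (R : Matrix (Fin 2) (Fin 2) ℝ) : Prop := R * Rᵀ = 1 ∧ R.det = 1

/-- The planar rigid motion `s ↦ R s + t` on Euclidean 2-space. -/
noncomputable def rigidAct (R : Matrix (Fin 2) (Fin 2) ℝ) (t : EuclideanSpace ℝ (Fin 2))
    (s : EuclideanSpace ℝ (Fin 2)) : EuclideanSpace ℝ (Fin 2) :=
  (WithLp.equiv 2 (Fin 2 → ℝ)).symm (R.mulVec (WithLp.equiv 2 (Fin 2 → ℝ) s)) + t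

/-- An `SO(2)` matrix has the familiar `[[a, b], [-b, a]]` shape. -/
lemma SO2.shape {R : Matrix (Fin 2) (Fin 2) ℝ} (hR : SO2 R) :
    R 1 1 = R 0 0 ∧ R 1 0 = -(R 0 1) := by
  obtain ⟨h1, h2⟩ := hR
  have e00 := congrFun (congrFun h1 0) 0
  have e01 := congrFun (congrFun h1 0) 1
  simp [Matrix.mul_apply, Fin.sum_univ_two, Matrix.one_apply] at e00 e01
  rw [Matrix.det_fin_two] at h2
  constructor
  · linear_combination (-(R 1 1))*e00 + (R 0 0)*h2 + (R 0 1)*e01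
  · linear_combination (-(R 1 0))*e00 - (R 0 1)*h2 + (R 0 0)*e01

/-- Two `SO(2)` matrices agreeing on a nonzero vector are equal. -/
lemma SO2.eq_of_mulVec_eq {R R0 : Matrix (Fin 2) (Fin 2) ℝ} (hR : SO2 R) (hR0 : SO2 R0)
    {v : Fin 2 → ℝ} (hv : v ≠ 0) (h : R.mulVec v = R0.mulVec v) : R = R0 := by
  obtain ⟨hd, hc⟩ := hR.shape
  obtain ⟨hd0, hc0⟩ := hR0.shape
  have e0 := congrFun h 0
  have e1 := congrFun h 1
  simp [Matrix.mulVec, dotProduct, Fin.sum_univ_two, hc, hc0, hd, hd0] at e0 e1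
  have hvpos : 0 < v 0 ^ 2 + v 1 ^ 2 := by
    have hcases : v 0 ≠ 0 ∨ v 1 ≠ 0 := by
      by_contra hcon
      push_neg at hcon
      exact hv (funext fun i => by fin_cases i <;> simp [hcon.1, hcon.2])
    rcases hcases with h' | h' <;> positivity
  have ha : R 0 0 = R0 0 0 := by
    have key : (R 0 0 - R0 0 0) * (v 0 ^ 2 + v 1 ^ 2) = 0 := by
      linear_combination (v 0) * e0 + (v 1) * e1
    have := mul_eq_zero.mp key
    rcases this with h' | h'
    · linarith
    · exact absurd h' hvpos.ne'
  have hb : R 0 1 = R0 0 1 := by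
    have key : (R 0 1 - R0 0 1) * (v 0 ^ 2 + v 1 ^ 2) = 0 := by
      linear_combination (v 1) * e0 - (v 0) * e1
    rcases mul_eq_zero.mp key with h' | h'
    · linarith
    · exact absurd h' hvpos.ne'
  ext i j
  fin_cases i <;> fin_cases j <;> simp [ha, hb, hc, hc0, hd, hd0]

/-- If the mean squared difference of distances to `x` and `y` vanishes and no line has full
measure, then `x = y`. -/
lemma eq_of_integral_sq_dist_diff_eq_zero (μ : Measure (EuclideanSpace ℝ (Fin 2)))
    [IsProbabilityMeasure μ]
    (hline : ∀ L : AffineSubspace ℝ (EuclideanSpace ℝ (Fin 2)),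
      Module.finrank ℝ L.direction = 1 → μ (L : Set (EuclideanSpace ℝ (Fin 2))) < 1)
    (x y : EuclideanSpace ℝ (Fin 2))
    (h : ∫ a, (‖a - x‖ - ‖a - y‖) ^ 2 ∂μ = 0) : x = y := by
  by_contra hne
  set f : EuclideanSpace ℝ (Fin 2) → ℝ := fun a => (‖a - x‖ - ‖a - y‖) ^ 2 with hf
  have hcont : Continuous f := by fun_prop
  have hbound : ∀ a, ‖f a‖ ≤ ‖x - y‖ ^ 2 := by
    intro a
    have h1 : |‖a - x‖ - ‖a - y‖| ≤ ‖(a - x) - (a - y)‖ := abs_norm_sub_norm_le _ _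
    have h2 : (a - x) - (a - y) = y - x := by abel
    rw [h2] at h1
    have : f a = |‖a - x‖ - ‖a - y‖| ^ 2 := by rw [hf]; simp [sq_abs]
    rw [norm_sub_rev y x] at h1
    rw [Real.norm_eq_abs, abs_of_nonneg (sq_nonneg _), this]
    exact pow_le_pow_left₀ (abs_nonneg _) h1 2
  have hint : Integrable f μ :=
    (integrable_const (‖x - y‖ ^ 2)).mono' hcont.aestronglyMeasurable
      (Filter.Eventually.of_forall hbound)
  have hae : f =ᵐ[μ] 0 :=
    (integral_eq_zero_iff_of_nonneg (fun a => sq_nonneg _) hint).mp h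
  have hmem : ∀ᵐ a ∂μ, a ∈ (AffineSubspace.perpBisector x y : Set (EuclideanSpace ℝ (Fin 2))) := by
    filter_upwards [hae] with a ha
    have : ‖a - x‖ = ‖a - y‖ := by
      have := sub_eq_zero.mp (pow_eq_zero_iff (n := 2) (by norm_num) |>.mp ha)
      linarith
    rw [SetLike.mem_coe, AffineSubspace.mem_perpBisector_iff_dist_eq]
    simpa [dist_eq_norm] using this
  have hfull : μ (AffineSubspace.perpBisector x y : Set (EuclideanSpace ℝ (Fin 2))) = 1 := by
    rw [measure_congr (MeasureTheory.ae_eq_univ.mpr (MeasureTheory.ae_iff.mp hmem))]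
    simp
  have hdim : Module.finrank ℝ (AffineSubspace.perpBisector x y).direction = 1 := by
    rw [AffineSubspace.direction_perpBisector]
    have hyx : y -ᵥ x ≠ 0 := by simpa [vsub_eq_sub, sub_eq_zero] using (Ne.symm hne)
    have h1 : Module.finrank ℝ (ℝ ∙ (y -ᵥ x)) = 1 := finrank_span_singleton hyx
    have h2 := Submodule.finrank_add_finrank_orthogonal (𝕜 := ℝ)
      (K := (Submodule.span ℝ {y -ᵥ x} : Submodule ℝ (EuclideanSpace ℝ (Fin 2))))
    rw [finrank_euclideanSpace_fin] at h2
    omega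
  exact absurd hfull (hline _ hdim).ne

/-- Identifiability (Theorem 4's key step): if `μ` gives no line full measure and the two tags
`s 0, s 1` are not colinear with the origin, then vanishing of
`P(Θ) = (1/2) ∑ᵢ ∫ (‖a − R sᵢ − t‖ − ‖a − R⁰ sᵢ − t⁰‖)² dμ(a)` forces
`R sᵢ + t = R⁰ sᵢ + t⁰` for both tags, and hence (for rotations) `R = R⁰` and `t = t⁰`. -/
theorem stmt12 (μ : Measure (EuclideanSpace ℝ (Fin 2))) [IsProbabilityMeasure μ]
    (hline : ∀ L : AffineSubspace ℝ (EuclideanSpace ℝ (Fin 2)),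
      Module.finrank ℝ L.direction = 1 → μ (L : Set (EuclideanSpace ℝ (Fin 2))) < 1)
    (s : Fin 2 → EuclideanSpace ℝ (Fin 2)) (hs : LinearIndependent ℝ s)
    (R R0 : Matrix (Fin 2) (Fin 2) ℝ) (t t0 : EuclideanSpace ℝ (Fin 2))
    (hR : SO2 R) (hR0 : SO2 R0)
    (hP : (1 / 2 : ℝ) * ∑ i : Fin 2,
        ∫ a, (‖a - rigidAct R t (s i)‖ - ‖a - rigidAct R0 t0 (s i)‖) ^ 2 ∂μ = 0) :
    (∀ i : Fin 2, rigidAct R t (s i) = rigidAct R0 t0 (s i)) ∧ R = R0 ∧ t = t0 := by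
  -- each integral is nonnegative, so each vanishes
  have hnn : ∀ i : Fin 2, 0 ≤ ∫ a, (‖a - rigidAct R t (s i)‖ - ‖a - rigidAct R0 t0 (s i)‖) ^ 2 ∂μ :=
    fun i => integral_nonneg fun a => sq_nonneg _
  have hsum : ∑ i : Fin 2,
      ∫ a, (‖a - rigidAct R t (s i)‖ - ‖a - rigidAct R0 t0 (s i)‖) ^ 2 ∂μ = 0 := by
    linarith [hP]
  have hzero : ∀ i : Fin 2,
      ∫ a, (‖a - rigidAct R t (s i)‖ - ‖a - rigidAct R0 t0 (s i)‖) ^ 2 ∂μ = 0 := by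
    intro i
    have := (Finset.sum_eq_zero_iff_of_nonneg (fun i _ => hnn i)).mp hsum
    exact this i (Finset.mem_univ i)
  have hact : ∀ i : Fin 2, rigidAct R t (s i) = rigidAct R0 t0 (s i) := fun i =>
    eq_of_integral_sq_dist_diff_eq_zero μ hline _ _ (hzero i)
  refine ⟨hact, ?_⟩
  -- translate to mulVec equalities
  set u : Fin 2 → (Fin 2 → ℝ) := fun i => WithLp.equiv 2 (Fin 2 → ℝ) (s i) with hu
  have hacts : ∀ i : Fin 2,
      (WithLp.equiv 2 (Fin 2 → ℝ)).symm (R.mulVec (u i)) + t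
        = (WithLp.equiv 2 (Fin 2 → ℝ)).symm (R0.mulVec (u i)) + t0 := fun i => hact i
  have hsub :
      (WithLp.equiv 2 (Fin 2 → ℝ)).symm (R.mulVec (u 0)) -
        (WithLp.equiv 2 (Fin 2 → ℝ)).symm (R.mulVec (u 1))
      = (WithLp.equiv 2 (Fin 2 → ℝ)).symm (R0.mulVec (u 0)) -
        (WithLp.equiv 2 (Fin 2 → ℝ)).symm (R0.mulVec (u 1)) := by
    have h0 := hacts 0
    have h1 := hacts 1
    have : ((WithLp.equiv 2 (Fin 2 → ℝ)).symm (R.mulVec (u 0)) + t) -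
        ((WithLp.equiv 2 (Fin 2 → ℝ)).symm (R.mulVec (u 1)) + t)
        = ((WithLp.equiv 2 (Fin 2 → ℝ)).symm (R0.mulVec (u 0)) + t0) -
        ((WithLp.equiv 2 (Fin 2 → ℝ)).symm (R0.mulVec (u 1)) + t0) := by rw [h0, h1]
    simpa [add_sub_add_right_eq_sub] using this
  have hmv : R.mulVec (u 0 - u 1) = R0.mulVec (u 0 - u 1) := by
    have := congrArg (WithLp.equiv 2 (Fin 2 → ℝ)) hsub
    simpa [Matrix.mulVec_sub] using this
  have hne : s 0 ≠ s 1 := by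
    intro hss
    exact (by norm_num : (0 : Fin 2) ≠ 1) (hs.injective hss)
  have hv : u 0 - u 1 ≠ 0 := by
    intro hzero'
    apply hne
    have : u 0 = u 1 := sub_eq_zero.mp hzero'
    exact (WithLp.equiv 2 (Fin 2 → ℝ)).injective this
  have hRR0 : R = R0 := SO2.eq_of_mulVec_eq hR hR0 hv hmv
  refine ⟨hRR0, ?_⟩
  have h0 := hacts 0
  rw [hRR0] at h0
  exact add_left_cancel h0
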